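/- Let G be an Eulerian simple graph on n ≥ 4 vertices in which the distance between any two triangles is at least 3, and suppose G contains at least one triangle. Let T1, ..., Tk be the triangles of G and, for each i, let v_i be a vertex of T_i of maximum degree in G. Then {v_1, ..., v_k} is a triangle removal set of G; that is, G − {v_1, ..., v_k} is triangle-free, each d_G(v_i) ≥ 4, every vertex of V(G) \ {v_1, ..., v_k} has even degree in G, and (N_G(v_i) ∪ {v_i}) ∩ (N_G(v_j) ∪ {v_j}) = ∅ for all distinct i, j. -/

import Mathlib

open SimpleGraph

lemma cross_edge {V : Type*} {G : SimpleGraph V} (S : Set V) :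
    ∀ {u w : V}, G.Walk u w → u ∈ S → w ∉ S → ∃ a ∈ S, ∃ b, b ∉ S ∧ G.Adj a b := by
  intro u w p
  induction p with
  | nil => intro hu hw; exact absurd hu hw
  | @cons u x w h p ih =>
    intro hu hw
    by_cases hx : x ∈ S
    · exact ih hx hw
    · exact ⟨u, hu, x, hx, h⟩


/-- Let `G` be an Eulerian graph on `n ≥ 4` vertices in which the distance between any two
distinct triangles is at least `3`, containing at least one triangle. For each triangle `T`
of `G`, let `v T` be a vertex of `T` of maximum degree in `G`. Then the set
`R = {v T : T a triangle of G}` is a triangle removal set of `G`: `G - R` is triangle-free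
(every triangle of `G` meets `R`), every vertex of `R` has degree at least `4`, every vertex
outside `R` has even degree, and distinct vertices of `R` have disjoint closed
neighbourhoods. -/
theorem stmt10 {V : Type*} [Fintype V] [DecidableEq V]
    (G : SimpleGraph V) [DecidableRel G.Adj]
    (hn : 4 ≤ Fintype.card V)
    (hconn : G.Connected) (heven : ∀ w, Even (G.degree w))
    (htri : ∀ T₁ T₂ : Finset V, G.IsNClique 3 T₁ → G.IsNClique 3 T₂ → T₁ ≠ T₂ →
      ∀ u ∈ T₁, ∀ w ∈ T₂, 3 ≤ G.dist u w)
    (hex : ∃ T : Finset V, G.IsNClique 3 T)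
    (v : Finset V → V)
    (hv : ∀ T : Finset V, G.IsNClique 3 T →
      v T ∈ T ∧ ∀ u ∈ T, G.degree u ≤ G.degree (v T)) :
    (∀ T : Finset V, G.IsNClique 3 T →
        ∃ y ∈ T, y ∈ {z : V | ∃ T' : Finset V, G.IsNClique 3 T' ∧ v T' = z}) ∧
    (∀ y ∈ {z : V | ∃ T' : Finset V, G.IsNClique 3 T' ∧ v T' = z}, 4 ≤ G.degree y) ∧
    (∀ y ∉ {z : V | ∃ T' : Finset V, G.IsNClique 3 T' ∧ v T' = z}, Even (G.degree y)) ∧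
    (∀ y ∈ {z : V | ∃ T' : Finset V, G.IsNClique 3 T' ∧ v T' = z},
      ∀ y' ∈ {z : V | ∃ T' : Finset V, G.IsNClique 3 T' ∧ v T' = z}, y ≠ y' →
        Disjoint (insert y (G.neighborSet y)) (insert y' (G.neighborSet y'))) := by
  refine ⟨?_, ?_, ?_, ?_⟩
  · intro T hT
    exact ⟨v T, (hv T hT).1, T, hT, rfl⟩
  · intro y hy
    obtain ⟨T, hT, rfl⟩ := hy
    obtain ⟨hvT, hmax⟩ := hv T hT
    obtain ⟨w, hw⟩ : ∃ w, w ∉ T := by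
      by_contra h
      push_neg at h
      have hsub : (Finset.univ : Finset V) ⊆ T := fun x _ => h x
      have := Finset.card_le_card hsub
      rw [Finset.card_univ, hT.2] at this
      omega
    obtain ⟨p⟩ := hconn.preconnected (v T) w
    obtain ⟨a, ha, b, hb, hab⟩ := cross_edge (↑T : Set V) p (by exact_mod_cast hvT)
      (by simpa using hw)
    have haT : a ∈ T := by exact_mod_cast ha
    have hbT : b ∉ T := by simpa using hb
    have hsub : insert b (T.erase a) ⊆ G.neighborFinset a := by
      intro x hx
      rcases Finset.mem_insert.1 hx with rfl | hx
      · simpa [mem_neighborFinset] using hab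
      · have hxT := Finset.mem_of_mem_erase hx
        have hxa := Finset.ne_of_mem_erase hx
        rw [mem_neighborFinset]
        exact hT.1 (by exact_mod_cast haT) (by exact_mod_cast hxT) hxa.symm
    have hcard : (insert b (T.erase a)).card = 3 := by
      rw [Finset.card_insert_of_notMem (fun hbm => hbT (Finset.mem_of_mem_erase hbm)),
        Finset.card_erase_of_mem haT, hT.2]
    have h3 : 3 ≤ G.degree a := by
      rw [← card_neighborFinset_eq_degree, ← hcard]
      exact Finset.card_le_card hsub
    have h4 : 4 ≤ G.degree a := by
      obtain ⟨r, hr⟩ := heven a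
      omega
    exact le_trans h4 (hmax a haT)
  · intro y _
    exact heven y
  · intro y hy y' hy' hne
    obtain ⟨T₁, hT₁, rfl⟩ := hy
    obtain ⟨T₂, hT₂, rfl⟩ := hy'
    have hTne : T₁ ≠ T₂ := fun h => hne (by rw [h])
    have hd := htri T₁ T₂ hT₁ hT₂ hTne (v T₁) (hv T₁ hT₁).1 (v T₂) (hv T₂ hT₂).1
    rw [Set.disjoint_left]
    intro z hz hz'
    have h1 : G.dist (v T₁) z ≤ 1 := by
      rcases Set.mem_insert_iff.1 hz with rfl | hadj
      · simp [SimpleGraph.dist_self]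
      · have := SimpleGraph.dist_le (hadj : G.Adj (v T₁) z).toWalk
        exact this
    have h2 : G.dist z (v T₂) ≤ 1 := by
      rcases Set.mem_insert_iff.1 hz' with rfl | hadj
      · simp [SimpleGraph.dist_self]
      · have := SimpleGraph.dist_le ((hadj : G.Adj (v T₂) z).symm.toWalk)
        simpa [SimpleGraph.Adj.toWalk] using this
    have htr := hconn.dist_triangle (u := v T₁) (v := z) (w := v T₂)
    omega
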